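/- The Newton primitive P_n of NSymm, defined by the recursion P_n = nZ_n - (Z_{n-1}P_1 + ... + Z_1 P_{n-1}), satisfies the closed formula P_n = Σ (-1)^{m+1} i_m Z_{i_1} Z_{i_2} ... Z_{i_m}, where the sum runs over all compositions (i_1, ..., i_m) of n into positive integers. -/

import Mathlib

/-- `NSymm` is the free associative algebra `ℤ⟨Z_1, Z_2, ...⟩`. -/
noncomputable abbrev NSymm : Type := FreeAlgebra ℤ ℕ

/-- `Z 0 = 1` and `Z (n+1)` is the generator `Z_{n+1}` of `NSymm`. -/
noncomputable def Z : ℕ → NSymm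
  | 0 => 1
  | n + 1 => FreeAlgebra.ι ℤ n

/-- The Newton primitives, defined by the recursion
`P n = n Z_n - (Z_{n-1} P_1 + Z_{n-2} P_2 + ⋯ + Z_1 P_{n-1})` (and `P 0 = 0`). -/
noncomputable def P : ℕ → NSymm
  | 0 => 0
  | n + 1 =>
    (n + 1) • Z (n + 1) - ∑ i ∈ (Finset.range n).attach, Z (n - i.1) * P (i.1 + 1)
  decreasing_by exact Nat.succ_lt_succ (Finset.mem_range.mp i.2)

/-- The closed formula as a function of `n`. -/
noncomputable def F (n : ℕ) : NSymm :=
  ∑ c : Composition n,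
      ((-1 : ℤ) ^ (c.length + 1) * (c.blocks.getLast! : ℤ)) • (c.blocks.map Z).prod

lemma blocks_ne_nil {n : ℕ} (hn : 0 < n) (c : Composition n) : c.blocks ≠ [] := by
  intro h
  have := c.blocks_sum
  rw [h] at this
  simp at this
  omega

/-- The one-block composition of `n+1`. -/
def singleC (n : ℕ) : Composition (n + 1) :=
  ⟨[n + 1], by simp, by simp⟩

/-- The splitting map. -/
def splitF (n : ℕ) : Unit ⊕ (Σ i : Fin n, Composition (i.1 + 1)) → Composition (n + 1)
  | Sum.inl _ => singleC n
  | Sum.inr ⟨i, c⟩ =>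
      ⟨(n - i.1) :: c.blocks, by
          intro j hj
          rcases List.mem_cons.1 hj with h | h
          · have := i.2; omega
          · exact c.blocks_pos h, by
          have := c.blocks_sum
          have := i.2
          simp only [List.sum_cons, this]
          omega⟩

lemma splitF_inr_blocks (n : ℕ) (i : Fin n) (c : Composition (i.1 + 1)) :
    (splitF n (Sum.inr ⟨i, c⟩)).blocks = (n - i.1) :: c.blocks := rfl

lemma splitF_bij (n : ℕ) : Function.Bijective (splitF n) := by
  constructor
  · rintro (⟨⟩ | ⟨i, c⟩) (⟨⟩ | ⟨j, d⟩) h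
    · rfl
    · have hb := congrArg Composition.blocks h
      rw [splitF_inr_blocks] at hb
      have : ([n+1] : List ℕ) = (n - j.1) :: d.blocks := hb
      have hd := blocks_ne_nil (by omega) d
      cases hdd : d.blocks with
      | nil => exact absurd hdd hd
      | cons x xs => rw [hdd] at this; simp at this
    · have hb := congrArg Composition.blocks h
      rw [splitF_inr_blocks] at hb
      have : ((n - i.1) :: c.blocks : List ℕ) = [n+1] := hb
      have hd := blocks_ne_nil (by omega) c
      cases hdd : c.blocks with
      | nil => exact absurd hdd hd
      | cons x xs => rw [hdd] at this; simp at this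
    · have hb := congrArg Composition.blocks h
      rw [splitF_inr_blocks, splitF_inr_blocks] at hb
      have htail : c.blocks = d.blocks := (List.cons.injEq _ _ _ _ ▸ hb).2
      have hij : i = j := by
        have hc := c.blocks_sum
        have hd := d.blocks_sum
        rw [htail, hd] at hc
        exact Fin.ext (by omega)
      subst hij
      exact congrArg _ (congrArg _ (Composition.ext htail))
  · intro c
    have hne := blocks_ne_nil (by omega : 0 < n + 1) c
    cases hb : c.blocks with
    | nil => exact absurd hb hne
    | cons b bs =>
      have hbpos : 0 < b := c.blocks_pos (by rw [hb]; exact List.mem_cons_self)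
      have hsum : b + bs.sum = n + 1 := by
        have := c.blocks_sum; rw [hb] at this; simpa using this
      cases hbs : bs with
      | nil =>
        refine ⟨Sum.inl ⟨⟩, ?_⟩
        apply Composition.ext
        have : b = n + 1 := by rw [hbs] at hsum; simpa using hsum
        simp [splitF, singleC, hb, hbs, this]
      | cons x xs =>
        have hbs_pos : 0 < bs.sum := by
          rw [hbs]
          have : 0 < x := c.blocks_pos (by rw [hb, hbs]; simp)
          simp; omega
        have hi : bs.sum - 1 < n := by omega
        refine ⟨Sum.inr ⟨⟨bs.sum - 1, hi⟩, ⟨bs, ?_, ?_⟩⟩, ?_⟩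
        · intro j hj2
          exact c.blocks_pos (by rw [hb]; exact List.mem_cons_of_mem _ hj2)
        · show bs.sum = bs.sum - 1 + 1; omega
        · apply Composition.ext
          show (n - (bs.sum - 1)) :: bs = c.blocks
          rw [hb]
          congr 1
          omega

lemma getLast!_cons {l : List ℕ} (h : l ≠ []) (b : ℕ) :
    (b :: l).getLast! = l.getLast! := by
  cases l with
  | nil => simp at h
  | cons x xs => simp [List.getLast!_eq_getLast?_getD]

/-- The recursion for `F`. -/
lemma F_rec (n : ℕ) :
    F (n + 1) = (n + 1) • Z (n + 1) -
      ∑ i ∈ (Finset.range n).attach, Z (n - i.1) * F (i.1 + 1) := by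
  have key := Fintype.sum_bijective (splitF n) (splitF_bij n)
    (fun x => ((-1 : ℤ) ^ ((splitF n x).length + 1) *
        ((splitF n x).blocks.getLast! : ℤ)) • ((splitF n x).blocks.map Z).prod)
    (fun c => ((-1 : ℤ) ^ (c.length + 1) * (c.blocks.getLast! : ℤ)) • (c.blocks.map Z).prod)
    (fun x => rfl)
  rw [F, ← key, Fintype.sum_sum_type]
  have h1 : ∑ _x : Unit, ((-1 : ℤ) ^ ((splitF n (Sum.inl _x)).length + 1) *
        ((splitF n (Sum.inl _x)).blocks.getLast! : ℤ)) • ((splitF n (Sum.inl _x)).blocks.map Z).prod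
      = (n + 1) • Z (n + 1) := by
    simp only [Finset.univ_unique, Finset.sum_singleton]
    show ((-1 : ℤ) ^ ((singleC n).length + 1) * (((singleC n).blocks.getLast! : ℤ))) •
        (((singleC n).blocks.map Z).prod) = _
    simp only [singleC, Composition.length, List.length_cons, List.length_nil,
      List.getLast!_eq_getLast?_getD, List.getLast?_singleton, Option.getD_some, List.map_cons, List.map_nil, List.prod_cons,
      List.prod_nil, mul_one]
    norm_num
  rw [h1]
  have h2 : ∀ i : Fin n, ∀ c : Composition (i.1 + 1),
      ((-1 : ℤ) ^ ((splitF n (Sum.inr ⟨i, c⟩)).length + 1) *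
        ((splitF n (Sum.inr ⟨i, c⟩)).blocks.getLast! : ℤ)) •
        ((splitF n (Sum.inr ⟨i, c⟩)).blocks.map Z).prod
      = -(Z (n - i.1) *
          (((-1 : ℤ) ^ (c.length + 1) * (c.blocks.getLast! : ℤ)) • (c.blocks.map Z).prod)) := by
    intro i c
    have hne := blocks_ne_nil (by omega : 0 < i.1 + 1) c
    have hlen : (splitF n (Sum.inr ⟨i, c⟩)).length = c.length + 1 := by
      simp [Composition.length, splitF_inr_blocks]
    rw [hlen, splitF_inr_blocks, getLast!_cons hne]
    simp only [List.map_cons, List.prod_cons]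
    rw [mul_smul_comm]
    rw [show c.length + 1 + 1 = (c.length + 1) + 1 from rfl, pow_succ]
    rw [mul_comm ((-1 : ℤ) ^ (c.length + 1)) (-1 : ℤ), mul_assoc, neg_one_mul, neg_smul]
  have h3 : ∑ x : (Σ i : Fin n, Composition (i.1 + 1)),
      ((-1 : ℤ) ^ ((splitF n (Sum.inr x)).length + 1) *
        ((splitF n (Sum.inr x)).blocks.getLast! : ℤ)) • ((splitF n (Sum.inr x)).blocks.map Z).prod
      = -∑ i ∈ (Finset.range n).attach, Z (n - i.1) * F (i.1 + 1) := by
    rw [← Finset.univ_sigma_univ, Finset.sum_sigma]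
    rw [← Finset.sum_neg_distrib]
    rw [Finset.sum_attach (Finset.range n) (fun i => -(Z (n - i) * F (i + 1)))]
    rw [← Fin.sum_univ_eq_sum_range (fun i => -(Z (n - i) * F (i + 1)))]
    refine Finset.sum_congr rfl fun i _ => ?_
    rw [F, Finset.mul_sum, ← Finset.sum_neg_distrib]
    exact Finset.sum_congr rfl fun c _ => h2 i c
  rw [h3, sub_eq_add_neg]

theorem stmt_7 (n : ℕ) (hn : 1 ≤ n) :
    P n = ∑ c : Composition n,
      ((-1 : ℤ) ^ (c.length + 1) * (c.blocks.getLast! : ℤ)) • (c.blocks.map Z).prod := by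
  show P n = F n
  induction n using Nat.strong_induction_on with
  | _ n ih =>
    match n, hn with
    | (m + 1), _ =>
      rw [P, F_rec]
      congr 1
      refine Finset.sum_congr rfl fun i _ => ?_
      rw [ih (i.1 + 1) (by have := Finset.mem_range.mp i.2; omega) (by omega)]
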